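/- Let p, q > 1 with 1/p + 1/q = 1, and define h(t,u) = 1/(1-e^{-t}) - e^{-(u+1)pt}/(1-e^{-pt}) - e^{uqt}/(1-e^{-qt}). Then for every fixed u ∈ ℝ, the limit of h(t,u) as t → 0⁺ equals 1/2. -/

import Mathlib

open Real Set Filter

/-- h(t,u) = 1/(1-e^{-t}) - e^{-(u+1)pt}/(1-e^{-pt}) - e^{uqt}/(1-e^{-qt}) -/
noncomputable def h (p q t u : ℝ) : ℝ :=
  1 / (1 - exp (-t)) - exp (-((u + 1) * p * t)) / (1 - exp (-(p * t)))
    - exp (u * q * t) / (1 - exp (-(q * t)))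

lemma mul_tendsto_pos {a : ℝ} (ha : 0 < a) :
    Tendsto (fun t : ℝ => a * t) (nhdsWithin 0 (Ioi 0)) (nhdsWithin 0 (Ioi 0)) := by
  apply tendsto_nhdsWithin_of_tendsto_nhds_of_eventually_within
  · have h1 : Tendsto (fun t : ℝ => a * t) (nhds 0) (nhds (a * 0)) :=
      (continuous_const.mul continuous_id).tendsto 0
    simpa using h1.mono_left nhdsWithin_le_nhds
  · filter_upwards [self_mem_nhdsWithin] with t ht
    exact mul_pos ha ht

lemma slope_exp (c : ℝ) :
    Tendsto (fun t : ℝ => (exp (c * t) - 1) / t) (nhdsWithin 0 (Ioi 0)) (nhds c) := by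
  have hd : HasDerivAt (fun t : ℝ => exp (c * t)) c 0 := by
    have := ((hasDerivAt_id (0:ℝ)).const_mul c).exp
    simpa using this
  have := hasDerivAt_iff_tendsto_slope.mp hd
  have h2 := this.mono_left (nhdsWithin_mono 0 (fun x hx => ne_of_gt hx : Ioi (0:ℝ) ⊆ {0}ᶜ))
  apply h2.congr'
  filter_upwards [self_mem_nhdsWithin] with t ht
  simp [slope_def_field, div_eq_div_iff, (mem_Ioi.mp ht).ne']

lemma one_sub_exp_div :
    Tendsto (fun x : ℝ => (1 - exp (-x)) / x) (nhdsWithin 0 (Ioi 0)) (nhds 1) := by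
  have hd : HasDerivAt (fun x : ℝ => 1 - exp (-x)) 1 0 := by
    have := ((hasDerivAt_id (0:ℝ)).neg.exp).const_sub 1
    simpa using this
  have := hasDerivAt_iff_tendsto_slope.mp hd
  have h2 := this.mono_left (nhdsWithin_mono 0 (fun x hx => ne_of_gt hx : Ioi (0:ℝ) ⊆ {0}ᶜ))
  apply h2.congr'
  filter_upwards [self_mem_nhdsWithin] with t ht
  simp [slope_def_field]

lemma ratio_tendsto :
    Tendsto (fun x : ℝ => x / (1 - exp (-x))) (nhdsWithin 0 (Ioi 0)) (nhds 1) := by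
  have := one_sub_exp_div.inv₀ one_ne_zero
  simpa [inv_div] using this

lemma key_quad :
    Tendsto (fun x : ℝ => (x - 1 + exp (-x)) / x ^ 2) (nhdsWithin 0 (Ioi 0)) (nhds (1/2)) := by
  have hz : Tendsto (fun x : ℝ => (x - 1 + exp (-x)) / x ^ 2 - 1/2)
      (nhdsWithin 0 (Ioi 0)) (nhds 0) := by
    have hg : Tendsto (fun x : ℝ => (2/9) * x) (nhdsWithin 0 (Ioi 0)) (nhds 0) := by
      have h1 : Tendsto (fun x : ℝ => (2/9 : ℝ) * x) (nhds 0) (nhds ((2/9) * 0)) :=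
        (continuous_const.mul continuous_id).tendsto 0
      simpa using h1.mono_left nhdsWithin_le_nhds
    apply squeeze_zero_norm' _ hg
    filter_upwards [Ioo_mem_nhdsGT_of_mem (show (0:ℝ) ∈ Ico (0:ℝ) 1 from ⟨le_refl 0, zero_lt_one⟩)]
      with x hx
    have hx0 : (0:ℝ) < x := hx.1
    have hx1 : x ≤ 1 := hx.2.le
    have hb := Real.exp_bound (x := -x) (by rw [abs_neg, abs_of_pos hx0]; exact hx1)
      (n := 3) (by norm_num)
    have hsum : ∑ m ∈ Finset.range 3, (-x) ^ m / (m.factorial : ℝ) = 1 - x + x ^ 2 / 2 := by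
      simp [Finset.sum_range_succ]
      ring
    rw [hsum] at hb
    have hb2 : |exp (-x) - (1 - x + x ^ 2 / 2)| ≤ (2/9) * x ^ 3 := by
      have : |(-x)| ^ 3 * ((3:ℕ).succ / ((3:ℕ).factorial * (3:ℕ)) : ℝ) = (2/9) * x ^ 3 := by
        rw [abs_neg, abs_of_pos hx0]
        norm_num [Nat.factorial]
        ring
      linarith [hb.trans_eq this]
    have hx2 : (0:ℝ) < x ^ 2 := by positivity
    have heq : (x - 1 + exp (-x)) / x ^ 2 - 1/2 = (exp (-x) - (1 - x + x ^ 2 / 2)) / x ^ 2 := by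
      field_simp
      ring
    rw [Real.norm_eq_abs, heq, abs_div, abs_of_pos hx2, div_le_iff₀ hx2]
    calc |exp (-x) - (1 - x + x ^ 2 / 2)| ≤ (2/9) * x ^ 3 := hb2
      _ = (2/9) * x * x ^ 2 := by ring
  have := hz.add_const (1/2)
  simpa using this

lemma keyL :
    Tendsto (fun x : ℝ => 1 / (1 - exp (-x)) - 1 / x) (nhdsWithin 0 (Ioi 0)) (nhds (1/2)) := by
  have hm := key_quad.mul ratio_tendsto
  apply Tendsto.congr' _ (by simpa using hm)
  filter_upwards [self_mem_nhdsWithin] with x hx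
  have hx0 : x ≠ 0 := ne_of_gt hx
  have hd : 1 - exp (-x) ≠ 0 := by
    have : exp (-x) < 1 := exp_lt_one_iff.mpr (by linarith [show (0:ℝ) < x from hx])
    linarith
  field_simp
  ring

theorem h_tendsto_half (p q : ℝ) (hp : 1 < p) (hq : 1 < q) (hpq : 1 / p + 1 / q = 1)
    (u : ℝ) :
    Tendsto (fun t : ℝ => h p q t u) (nhdsWithin 0 (Ioi 0)) (nhds (1 / 2)) := by
  have hp0 : (0:ℝ) < p := lt_trans one_pos hp
  have hq0 : (0:ℝ) < q := lt_trans one_pos hq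
  set c1 : ℝ := -((u + 1) * p) with hc1
  set c2 : ℝ := u * q with hc2
  have l1 := keyL
  have l2 := keyL.comp (mul_tendsto_pos hp0)
  have l3 := keyL.comp (mul_tendsto_pos hq0)
  have r2 := ratio_tendsto.comp (mul_tendsto_pos hp0)
  have r3 := ratio_tendsto.comp (mul_tendsto_pos hq0)
  have b1 := ((slope_exp c1).mul r2).const_mul (1/p)
  have b2 := ((slope_exp c2).mul r3).const_mul (1/q)
  have big := (((l1.sub l2).sub l3).sub b1).sub b2
  have hval : (1/2 - 1/2 - 1/2 : ℝ) - 1/p * (c1 * 1) - 1/q * (c2 * 1) = 1/2 := by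
    rw [hc1, hc2]
    field_simp
    ring
  rw [hval] at big
  apply Tendsto.congr' _ big
  filter_upwards [self_mem_nhdsWithin] with t ht
  have ht0 : t ≠ 0 := ne_of_gt ht
  have hD1 : 1 - exp (-t) ≠ 0 := by
    have : exp (-t) < 1 := exp_lt_one_iff.mpr (by linarith [show (0:ℝ) < t from ht]); linarith
  have hD2 : 1 - exp (-(p * t)) ≠ 0 := by
    have : exp (-(p * t)) < 1 := exp_lt_one_iff.mpr (by nlinarith [show (0:ℝ) < t from ht]); linarith
  have hD3 : 1 - exp (-(q * t)) ≠ 0 := by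
    have : exp (-(q * t)) < 1 := exp_lt_one_iff.mpr (by nlinarith [show (0:ℝ) < t from ht]); linarith
  have h1t : 1 / (p * t) + 1 / (q * t) = 1 / t := by
    have e : 1 / (p * t) + 1 / (q * t) = (1/p + 1/q) * (1/t) := by
      field_simp
    rw [e, hpq, one_mul]
  simp only [Function.comp]
  have eA : exp (-((u + 1) * p * t)) = exp (c1 * t) := congrArg exp (by rw [hc1]; ring)
  have eB : exp (u * q * t) = exp (c2 * t) := congrArg exp (by rw [hc2])
  have key : (1 / (1 - exp (-t)) - 1 / t
      - (1 / (1 - exp (-(p * t))) - 1 / (p * t))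
      - (1 / (1 - exp (-(q * t))) - 1 / (q * t))
      - 1/p * ((exp (c1 * t) - 1) / t * (p * t / (1 - exp (-(p * t)))))
      - 1/q * ((exp (c2 * t) - 1) / t * (q * t / (1 - exp (-(q * t))))))
      = h p q t u + (1 / (p * t) + 1 / (q * t) - 1 / t) := by
    rw [h, eA, eB]
    field_simp
    ring
  rw [key, h1t]
  ring
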